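/- Let X and H be real Hilbert spaces with a continuous linear embedding ι : X → H satisfying ‖ιv‖_H ≤ C_E‖v‖_X for all v ∈ X, let X_N ⊆ X be a linear subspace, F : X → X* Lipschitz continuous with constant L_F > 0 and strongly monotone with constant ν > 0, and u* ∈ X with ⟨F(u*), v⟩ = 0 for all v ∈ X. Let u ∈ X_N and ψ ∈ X_N satisfy (ιψ, ιv)_H = ⟨F(u), v⟩ for all v ∈ X_N, suppose ũ ∈ X satisfies ⟨F(ũ), v⟩ = (ιψ, ιv)_H for all v ∈ X, and let η ≥ 0 satisfy (ιψ, ιw)_H − ⟨F(u), w⟩ ≤ η for all w ∈ X with ‖w‖_X = 1. Then ‖u* − u‖_X ≤ η/ν + (C_E/ν)‖ιψ‖_H. -/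

import Mathlib

/-- A posteriori error bound based on the nonlinear elliptic reconstruction:
the total error is controlled by the discretization estimator `η/ν` and the
linearization term `(C_E/ν)‖ιψ‖_H`. -/
theorem ilg_aposteriori_nonlinear_reconstruction
    {X : Type*} [NormedAddCommGroup X] [InnerProductSpace ℝ X] [CompleteSpace X]
    {H : Type*} [NormedAddCommGroup H] [InnerProductSpace ℝ H] [CompleteSpace H]
    (ι : X →L[ℝ] H) (hι : Function.Injective ι)
    (CE : ℝ) (hCE : ∀ v : X, ‖ι v‖ ≤ CE * ‖v‖)
    (XN : Submodule ℝ X)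
    (F : X → X →L[ℝ] ℝ) (L ν : ℝ) (hL : 0 < L) (hν : 0 < ν)
    (hlip : ∀ u v w : X, |F u w - F v w| ≤ L * ‖u - v‖ * ‖w‖)
    (hmono : ∀ u v : X, ν * ‖u - v‖ ^ 2 ≤ F u (u - v) - F v (u - v))
    (ustar : X) (hustar : ∀ v : X, F ustar v = 0)
    (u ψ : X) (hu : u ∈ XN) (hψ : ψ ∈ XN)
    (hriesz : ∀ v ∈ XN, (inner ℝ (ι ψ) (ι v) : ℝ) = F u v)
    (utilde : X)
    (hrec : ∀ v : X, F utilde v = (inner ℝ (ι ψ) (ι v) : ℝ))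
    (η : ℝ) (hη0 : 0 ≤ η)
    (hres : ∀ w : X, ‖w‖ = 1 → (inner ℝ (ι ψ) (ι w) : ℝ) - F u w ≤ η) :
    ‖ustar - u‖ ≤ η / ν + (CE / ν) * ‖ι ψ‖ := by
  set d := utilde - u with hd
  set e := ustar - utilde with he
  -- nonnegativity of CE * ‖ι ψ‖
  have hCEψ : 0 ≤ CE * ‖ι ψ‖ := by
    rcases eq_or_ne (‖ι ψ‖) 0 with h0 | h0
    · simp [h0]
    · have h1 : 0 < ‖ι ψ‖ := lt_of_le_of_ne (norm_nonneg _) (Ne.symm h0)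
      have h2 := hCE ψ
      have h3 : 0 ≤ ‖ψ‖ := norm_nonneg _
      nlinarith
  -- bound on ‖d‖
  have hdb : ‖d‖ ≤ η / ν := by
    rcases eq_or_ne d 0 with h0 | h0
    · rw [h0, norm_zero]; positivity
    · have hn : 0 < ‖d‖ := norm_pos_iff.mpr h0
      have h3 : (inner ℝ (ι ψ) (ι d) : ℝ) - F u d ≤ η * ‖d‖ := by
        have hw := hres (‖d‖⁻¹ • d) (by rw [norm_smul, norm_inv, norm_norm]; field_simp)
        have heq : (inner ℝ (ι ψ) (ι (‖d‖⁻¹ • d)) : ℝ) - F u (‖d‖⁻¹ • d)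
            = ‖d‖⁻¹ * ((inner ℝ (ι ψ) (ι d) : ℝ) - F u d) := by
          rw [map_smul, inner_smul_right, map_smul]
          simp [smul_eq_mul]; ring
        rw [heq] at hw
        have := mul_le_mul_of_nonneg_left hw (le_of_lt hn)
        rw [← mul_assoc, mul_inv_cancel₀ (ne_of_gt hn), one_mul] at this
        linarith [this]
      have h1 := hmono utilde u
      have h2 : F utilde d = inner ℝ (ι ψ) (ι d) := hrec d
      have key : ν * ‖d‖ ^ 2 ≤ η * ‖d‖ := by
        rw [← hd] at h1; linarith
      rw [le_div_iff₀ hν]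
      nlinarith
  -- bound on ‖e‖
  have heb : ‖e‖ ≤ CE / ν * ‖ι ψ‖ := by
    rcases eq_or_ne e 0 with h0 | h0
    · rw [h0, norm_zero, div_mul_eq_mul_div]
      positivity
    · have hn : 0 < ‖e‖ := norm_pos_iff.mpr h0
      have h1 := hmono ustar utilde
      rw [← he] at h1
      have h2 : F ustar e = 0 := hustar e
      have h3 : F utilde e = inner ℝ (ι ψ) (ι e) := hrec e
      have h4 : -(inner ℝ (ι ψ) (ι e) : ℝ) ≤ ‖ι ψ‖ * ‖ι e‖ := by
        have := abs_real_inner_le_norm (ι ψ) (ι e)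
        have := abs_le.mp (abs_le.mpr ⟨neg_abs_le _, le_abs_self _⟩ : |(inner ℝ (ι ψ) (ι e) : ℝ)| ≤ |(inner ℝ (ι ψ) (ι e) : ℝ)|)
        linarith [abs_real_inner_le_norm (ι ψ) (ι e), neg_abs_le (inner ℝ (ι ψ) (ι e) : ℝ)]
      have h5 : ‖ι e‖ ≤ CE * ‖e‖ := hCE e
      have key : ν * ‖e‖ ^ 2 ≤ ‖ι ψ‖ * (CE * ‖e‖) := by
        have h6 : ‖ι ψ‖ * ‖ι e‖ ≤ ‖ι ψ‖ * (CE * ‖e‖) :=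
          mul_le_mul_of_nonneg_left h5 (norm_nonneg _)
        linarith
      rw [div_mul_eq_mul_div, le_div_iff₀ hν]
      nlinarith
  have htri : ‖ustar - u‖ ≤ ‖e‖ + ‖d‖ := by
    have : ustar - u = e + d := by rw [he, hd]; abel
    rw [this]; exact norm_add_le _ _
  linarith
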